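/- Let (Ω, ℱ, P) be a probability space, ℋ ⊆ ℱ a sub-σ-algebra, U : Ω → {0,1} an ℱ-measurable random variable, A ∈ ℋ an event, and p ∈ [0,1) a constant. Let p_ℋ be a version of P[U = 1 | ℋ] and assume that p_ℋ · 𝟙_A ≤ p almost surely. Let ζ be a random variable, uniformly distributed on [0,1], independent of the σ-algebra generated by ℋ and U. Define U* = 𝟙_A · ( U + (1 − U) · 𝟙{ζ ≤ (p − p_ℋ)/(1 − p_ℋ)} ) + 𝟙_{A^c} · 𝟙{ζ ≤ p}. Then: (i) U · 𝟙_A ≤ U*; (ii) P[U* = 1 | ℋ] = p almost surely; consequently U* is a Bernoulli(p) random variable independent of ℋ. -/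

import Mathlib

open MeasureTheory ProbabilityTheory

/-- The coupling construction dominating a dependent Bernoulli variable `U` (on the
event `A ∈ ℋ`) by an exactly Bernoulli(`p`) variable `U*` independent of `ℋ`:
if `p_ℋ` is a version of `P[U = 1 | ℋ]` with `p_ℋ·𝟙_A ≤ p` a.s., and `ζ` is
uniform on `[0,1]` and independent of `σ(ℋ, U)`, then
`U* = 𝟙_A(U + (1−U)·𝟙{ζ ≤ (p−p_ℋ)/(1−p_ℋ)}) + 𝟙_{Aᶜ}·𝟙{ζ ≤ p}` satisfies
`U·𝟙_A ≤ U*`, `P[U* = 1 | ℋ] = p` a.s., and consequently `U*` is a Bernoulli(`p`)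
random variable independent of `ℋ`. -/
theorem bernoulli_domination_coupling
    {Ω : Type*} {m0 : MeasurableSpace Ω} (P : Measure Ω) [IsProbabilityMeasure P]
    (H : MeasurableSpace Ω) (hH : H ≤ m0)
    (U : Ω → ℝ) (hUmeas : Measurable[m0] U) (hU01 : ∀ ω, U ω = 0 ∨ U ω = 1)
    (A : Set Ω) (hA : MeasurableSet[H] A)
    (p : ℝ) (hp0 : 0 ≤ p) (hp1 : p < 1)
    (pH : Ω → ℝ) (hpHmeas : Measurable[H] pH)
    (hpH : pH =ᵐ[P] P[Set.indicator {ω | U ω = 1} (fun _ => (1 : ℝ))|H])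
    (hbound : ∀ᵐ ω ∂P, pH ω * A.indicator (fun _ => (1 : ℝ)) ω ≤ p)
    (ζ : Ω → ℝ) (hζmeas : Measurable[m0] ζ)
    (hunif : @Measure.map Ω ℝ m0 Real.measurableSpace ζ P =
      MeasureTheory.volume.restrict (Set.Icc (0 : ℝ) 1))
    (hindep : Indep (MeasurableSpace.comap ζ Real.measurableSpace)
        (H ⊔ MeasurableSpace.comap U Real.measurableSpace) P)
    (Ustar : Ω → ℝ)
    (hUstar : ∀ ω, Ustar ω =
      A.indicator (fun ω' => U ω' + (1 - U ω') *
        Set.indicator {ω'' | ζ ω'' ≤ (p - pH ω'') / (1 - pH ω'')} (fun _ => (1 : ℝ)) ω') ω +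
      Aᶜ.indicator (fun ω' =>
        Set.indicator {ω'' | ζ ω'' ≤ p} (fun _ => (1 : ℝ)) ω') ω) :
    (∀ ω, U ω * A.indicator (fun _ => (1 : ℝ)) ω ≤ Ustar ω) ∧
    (P[Set.indicator {ω | Ustar ω = 1} (fun _ => (1 : ℝ))|H] =ᵐ[P] fun _ => p) ∧
    Indep (MeasurableSpace.comap Ustar Real.measurableSpace) H P ∧
    P {ω | Ustar ω = 1} = ENNReal.ofReal p := by
  classical
  haveI : SigmaFinite (P.trim hH) := inferInstance
  -- basic abbreviations
  set S1 : Set Ω := {ω | U ω = 1} with hS1def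
  have hS1m0 : MeasurableSet[m0] S1 := hUmeas (measurableSet_singleton 1)
  have hS1comap : MeasurableSet[MeasurableSpace.comap U Real.measurableSpace] S1 :=
    ⟨{1}, measurableSet_singleton 1, rfl⟩
  set mSup := H ⊔ MeasurableSpace.comap U Real.measurableSpace with hmSupdef
  letI : MeasurableSpace Ω := m0
  have hSup_le : mSup ≤ m0 := sup_le hH (measurable_iff_comap_le.mp hUmeas)
  have hHSup : H ≤ mSup := le_sup_left
  have hUSup : MeasurableSpace.comap U Real.measurableSpace ≤ mSup := le_sup_right
  have hAm0 : MeasurableSet[m0] A := hH _ hA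
  -- the H-measurable threshold function
  set ρ : Ω → ℝ := A.indicator (fun ω => (p - pH ω) / (1 - pH ω)) with hρdef
  have hρH : Measurable[H] ρ :=
    ((measurable_const.sub hpHmeas).div (measurable_const.sub hpHmeas)).indicator hA
  have hρ0 : Measurable[m0] ρ := hρH.mono hH le_rfl
  -- integrability facts
  have hind1_int : Integrable (S1.indicator (fun _ => (1 : ℝ))) P :=
    (integrable_const (1 : ℝ)).indicator hS1m0
  have hpH_int : Integrable pH P := integrable_condExp.congr hpH.symm
  -- a.e. bounds
  have hpH_nonneg : ∀ᵐ ω ∂P, 0 ≤ pH ω := by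
    have h0 : (0 : Ω → ℝ) ≤ᵐ[P] P[S1.indicator (fun _ => (1 : ℝ))|H] :=
      condExp_nonneg (Filter.Eventually.of_forall fun ω =>
        Set.indicator_nonneg (fun _ _ => zero_le_one) ω)
    filter_upwards [h0, hpH] with ω h1 h2
    rw [h2]; exact h1
  have hpH_le_one : ∀ᵐ ω ∂P, pH ω ≤ 1 := by
    have h1 : P[S1.indicator (fun _ => (1 : ℝ))|H] ≤ᵐ[P] P[(fun _ : Ω => (1 : ℝ))|H] :=
      condExp_mono hind1_int (integrable_const 1)
        (Filter.Eventually.of_forall fun ω =>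
          Set.indicator_le_self' (fun _ _ => zero_le_one) ω)
    filter_upwards [h1, hpH] with ω hω hpω
    rw [hpω]
    calc (P[S1.indicator (fun _ => (1 : ℝ))|H]) ω ≤ (P[(fun _ : Ω => (1 : ℝ))|H]) ω := hω
      _ = 1 := by rw [condExp_const hH]
  have hA_bound : ∀ᵐ ω ∂P, ω ∈ A → pH ω ≤ p := by
    filter_upwards [hbound] with ω h hωA
    simpa [Set.indicator_of_mem hωA] using h
  have hρ_props : ∀ᵐ ω ∂P, 0 ≤ ρ ω ∧ ρ ω ≤ 1 ∧
      (ω ∈ A → pH ω + ρ ω * (1 - pH ω) = p) := by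
    filter_upwards [hpH_nonneg, hA_bound] with ω h0 hle
    by_cases hωA : ω ∈ A
    · have hple : pH ω ≤ p := hle hωA
      have h1p : 0 < 1 - pH ω := by linarith
      have hρω : ρ ω = (p - pH ω) / (1 - pH ω) := Set.indicator_of_mem hωA _
      refine ⟨?_, ?_, fun _ => ?_⟩
      · rw [hρω]; exact div_nonneg (by linarith) h1p.le
      · rw [hρω, div_le_one h1p]; linarith
      · rw [hρω, div_mul_cancel₀ _ h1p.ne']; ring
    · have hρω : ρ ω = 0 := Set.indicator_of_notMem hωA _
      exact ⟨by rw [hρω], by rw [hρω]; exact zero_le_one, fun h => absurd h hωA⟩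
  have hρ_int : Integrable ρ P := by
    refine (integrable_const (1 : ℝ)).mono' hρ0.aestronglyMeasurable ?_
    filter_upwards [hρ_props] with ω hω
    rw [Real.norm_eq_abs, abs_of_nonneg hω.1]; exact hω.2.1
  -- distribution of ζ
  have hmapIic : ∀ t : ℝ, 0 ≤ t → t ≤ 1 →
      (@Measure.map Ω ℝ m0 Real.measurableSpace ζ P) (Set.Iic t) = ENNReal.ofReal t := by
    intro t h0 h1
    rw [hunif, Measure.restrict_apply measurableSet_Iic]
    have hset : Set.Iic t ∩ Set.Icc 0 1 = Set.Icc 0 t := by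
      ext x
      simp only [Set.mem_inter_iff, Set.mem_Iic, Set.mem_Icc]
      constructor
      · rintro ⟨hx, hx0, _⟩; exact ⟨hx0, hx⟩
      · rintro ⟨hx0, hx⟩; exact ⟨hx, hx0, hx.trans h1⟩
    rw [hset, Real.volume_Icc, sub_zero]
  -- the relevant events
  set Zρ : Set Ω := {ω | ζ ω ≤ ρ ω} with hZρdef
  have hZρm : MeasurableSet[m0] Zρ := measurableSet_le hζmeas hρ0
  set Zp : Set Ω := {ω | ζ ω ≤ p} with hZpdef
  have hZpm : MeasurableSet[m0] Zp := measurableSet_le hζmeas measurable_const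
  -- membership lemmas
  have hmemS1 : ∀ ω, ω ∈ S1 ↔ U ω = 1 := fun ω => Iff.rfl
  have hmemZρ : ∀ ω, ω ∈ Zρ ↔ ζ ω ≤ ρ ω := fun ω => Iff.rfl
  have hmemZp : ∀ ω, ω ∈ Zp ↔ ζ ω ≤ p := fun ω => Iff.rfl
  -- an if-then-else description of Ustar
  have hval : ∀ ω, Ustar ω = if ω ∈ A then (if U ω = 1 then 1 else if ζ ω ≤ ρ ω then 1 else 0)
      else if ζ ω ≤ p then 1 else 0 := by
    intro ω
    rw [hUstar ω]
    by_cases hωA : ω ∈ A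
    · have hρω : ρ ω = (p - pH ω) / (1 - pH ω) := Set.indicator_of_mem hωA _
      rcases hU01 ω with hU | hU <;>
        by_cases hζω : ζ ω ≤ (p - pH ω) / (1 - pH ω) <;>
          simp [Set.indicator_apply, Set.mem_setOf_eq, Set.mem_compl_iff, hωA, hU, hρω, hζω]
    · rw [Set.indicator_of_notMem hωA, if_neg hωA,
        Set.indicator_of_mem (by simp [hωA] : ω ∈ Aᶜ)]
      split_ifs with h
      · simp [Set.indicator_apply, hmemZp ω, h]
      · simp [Set.indicator_apply, hmemZp ω, h]
  -- description of {Ustar = 1}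
  have hTset : {ω | Ustar ω = 1} = (A ∩ S1) ∪ ((A ∩ S1ᶜ) ∩ Zρ) ∪ (Aᶜ ∩ Zp) := by
    ext ω
    simp only [Set.mem_setOf_eq, Set.mem_union, Set.mem_inter_iff, Set.mem_compl_iff,
      hmemS1 ω, hmemZρ ω, hmemZp ω]
    rw [hval ω]
    split_ifs with h1 h2 h3 h4
    · simp [h1, h2]
    · simp [h1, h2, h3]
    · simp [h1, h2, h3]
    · simp [h1, h4]
    · simp [h1, h4]
  have hTm0 : MeasurableSet[m0] {ω | Ustar ω = 1} := by
    rw [hTset]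
    exact ((hAm0.inter hS1m0).union ((hAm0.inter hS1m0.compl).inter hZρm)).union
      (hAm0.compl.inter hZpm)
  -- Ustar is {0,1}-valued
  have hUstar01 : ∀ ω, Ustar ω = 0 ∨ Ustar ω = 1 := by
    intro ω
    rw [hval ω]
    split_ifs <;> norm_num
  -- generic set-integral of an indicator
  have hsetint : ∀ s E : Set Ω, MeasurableSet[m0] s → MeasurableSet[m0] E →
      ∫ ω in E, s.indicator (fun _ => (1 : ℝ)) ω ∂P = (P (s ∩ E)).toReal := by
    intro s E hs hE
    rw [setIntegral_indicator hs, setIntegral_const, smul_eq_mul, mul_one, Set.inter_comm, measureReal_def]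
  -- term 1 : P (E ∩ S1) for E ∈ H
  have hterm1 : ∀ E : Set Ω, MeasurableSet[H] E →
      P (E ∩ S1) = ENNReal.ofReal (∫ ω in E, pH ω ∂P) := by
    intro E hE
    have hE0 : MeasurableSet[m0] E := hH _ hE
    have h1 : ∫ ω in E, pH ω ∂P = ∫ ω in E, S1.indicator (fun _ => (1 : ℝ)) ω ∂P := by
      rw [← setIntegral_condExp hH hind1_int hE]
      exact setIntegral_congr_ae hE0 (by filter_upwards [hpH] with ω h _; exact h)
    rw [h1, hsetint S1 E hS1m0 hE0, Set.inter_comm, ENNReal.ofReal_toReal (measure_ne_top P _)]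
  -- pull-out property
  have hmul_int : Integrable (fun ω => ρ ω * S1.indicator (fun _ => (1 : ℝ)) ω) P := by
    refine (integrable_const (1 : ℝ)).mono'
      ((hρ0.mul (measurable_const.indicator hS1m0)).aestronglyMeasurable) ?_
    filter_upwards [hρ_props] with ω hω
    have hind : |S1.indicator (fun _ => (1 : ℝ)) ω| ≤ 1 := by
      by_cases h : ω ∈ S1 <;> simp [Set.indicator_apply, h]
    rw [Real.norm_eq_abs, abs_mul]
    calc |ρ ω| * |S1.indicator (fun _ => (1 : ℝ)) ω| ≤ 1 * 1 := by
          refine mul_le_mul ?_ hind (abs_nonneg _) zero_le_one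
          rw [abs_of_nonneg hω.1]; exact hω.2.1
      _ = 1 := one_mul 1
  have hρpH_int : Integrable (fun ω => ρ ω * pH ω) P := by
    refine hpH_int.abs.mono' ((hρ0.mul (hpHmeas.mono hH le_rfl)).aestronglyMeasurable) ?_
    filter_upwards [hρ_props] with ω hω
    rw [Real.norm_eq_abs, abs_mul]
    calc |ρ ω| * |pH ω| ≤ 1 * |pH ω| := by
          refine mul_le_mul_of_nonneg_right ?_ (abs_nonneg _)
          rw [abs_of_nonneg hω.1]; exact hω.2.1
      _ = |pH ω| := one_mul _
  have hpull : ∀ E : Set Ω, MeasurableSet[H] E →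
      ∫ ω in E, ρ ω * S1.indicator (fun _ => (1 : ℝ)) ω ∂P = ∫ ω in E, ρ ω * pH ω ∂P := by
    intro E hE
    have hE0 : MeasurableSet[m0] E := hH _ hE
    rw [← setIntegral_condExp hH hmul_int hE]
    refine setIntegral_congr_ae hE0 ?_
    have h3 := condExp_mul_of_stronglyMeasurable_left (μ := P) (m := H) hρH.stronglyMeasurable
      hmul_int hind1_int
    filter_upwards [h3, hpH] with ω hω hpω _
    calc (P[(fun ω => ρ ω * S1.indicator (fun _ => (1 : ℝ)) ω)|H]) ω
        = ρ ω * (P[S1.indicator (fun _ => (1 : ℝ))|H]) ω := hω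
      _ = ρ ω * pH ω := by rw [← hpω]
  -- term 2 : the Fubini/independence computation
  have hterm2 : ∀ D : Set Ω, MeasurableSet[mSup] D →
      P (D ∩ Zρ) = ENNReal.ofReal (∫ ω in D, ρ ω ∂P) := by
    intro D hD
    have hD0 : MeasurableSet[m0] D := hSup_le _ hD
    set W : Ω → ℝ × ℝ := fun ω => (ρ ω, D.indicator (fun _ => (1 : ℝ)) ω) with hWdef
    have hWSup : Measurable[mSup] W :=
      (hρH.mono hHSup le_rfl).prodMk (measurable_const.indicator hD)
    have hW0 : Measurable[m0] W := hWSup.mono hSup_le le_rfl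
    have hindepW : IndepFun ζ W P := by
      rw [IndepFun_iff_Indep]
      rw [Indep_iff] at hindep ⊢
      intro t1 t2 h1 h2
      exact hindep t1 t2 h1 (measurable_iff_comap_le.mp hWSup _ h2)
    haveI : IsProbabilityMeasure (@Measure.map Ω ℝ m0 Real.measurableSpace ζ P) :=
      Measure.isProbabilityMeasure_map hζmeas.aemeasurable
    haveI : IsProbabilityMeasure (@Measure.map Ω (ℝ × ℝ) m0 _ W P) :=
      Measure.isProbabilityMeasure_map hW0.aemeasurable
    have hmap : @Measure.map Ω ((ℝ × ℝ) × ℝ) m0 _ (fun ω => (W ω, ζ ω)) P =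
        (@Measure.map Ω (ℝ × ℝ) m0 _ W P).prod (@Measure.map Ω ℝ m0 _ ζ P) :=
      (indepFun_iff_map_prod_eq_prod_map_map hW0.aemeasurable hζmeas.aemeasurable).1
        hindepW.symm
    set S : Set ((ℝ × ℝ) × ℝ) := {q | q.2 ≤ q.1.1 ∧ q.1.2 = 1} with hSdef
    have hSm : MeasurableSet S := by
      have : S = {q : (ℝ × ℝ) × ℝ | q.2 ≤ q.1.1} ∩ {q : (ℝ × ℝ) × ℝ | q.1.2 = 1} := rfl
      rw [this]
      exact (measurableSet_le measurable_snd (measurable_fst.comp measurable_fst)).inter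
        ((measurable_snd.comp measurable_fst) (measurableSet_singleton 1))
    have hpre : (fun ω => (W ω, ζ ω)) ⁻¹' S = D ∩ Zρ := by
      ext ω
      simp only [Set.mem_preimage, hSdef, Set.mem_setOf_eq, hWdef, Set.mem_inter_iff,
        hZρdef, Set.indicator_apply]
      by_cases hωD : ω ∈ D <;> simp [hωD, and_comm]
    have hF : Measurable fun t : ℝ => (@Measure.map Ω ℝ m0 Real.measurableSpace ζ P) (Set.Iic t) := by
      apply Monotone.measurable
      intro a b hab
      exact measure_mono (Set.Iic_subset_Iic.mpr hab)
    have hmeasset : MeasurableSet {x : ℝ × ℝ | x.2 = 1} :=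
      measurable_snd (measurableSet_singleton 1)
    have hcalc : P (D ∩ Zρ) =
        ∫⁻ x, Set.indicator {x : ℝ × ℝ | x.2 = 1}
          (fun x => (@Measure.map Ω ℝ m0 Real.measurableSpace ζ P) (Set.Iic x.1)) x
          ∂(@Measure.map Ω (ℝ × ℝ) m0 _ W P) := by
      rw [← hpre, ← Measure.map_apply (hW0.prodMk hζmeas) hSm, hmap,
        Measure.prod_apply hSm]
      apply lintegral_congr
      intro x
      have hslice : (Prod.mk x ⁻¹' S : Set ℝ) = if x.2 = 1 then Set.Iic x.1 else ∅ := by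
        ext z
        by_cases h : x.2 = 1 <;> simp [hSdef, h]
      rw [hslice]
      by_cases h : x.2 = 1 <;> simp [h, Set.indicator_apply]
    have hlift : ∫⁻ x, Set.indicator {x : ℝ × ℝ | x.2 = 1}
          (fun x => (@Measure.map Ω ℝ m0 Real.measurableSpace ζ P) (Set.Iic x.1)) x
          ∂(@Measure.map Ω (ℝ × ℝ) m0 _ W P)
        = ∫⁻ ω, D.indicator
            (fun ω => (@Measure.map Ω ℝ m0 Real.measurableSpace ζ P) (Set.Iic (ρ ω))) ω ∂P := by
      have hFm : Measurable fun x : ℝ × ℝ =>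
          (@Measure.map Ω ℝ m0 Real.measurableSpace ζ P) (Set.Iic x.1) := hF.comp measurable_fst
      rw [lintegral_map (hFm.indicator hmeasset) hW0]
      apply lintegral_congr
      intro ω
      by_cases hωD : ω ∈ D <;> simp [Set.indicator_apply, hωD, hWdef]
    have hae : ∀ᵐ ω ∂P, D.indicator
          (fun ω => (@Measure.map Ω ℝ m0 Real.measurableSpace ζ P) (Set.Iic (ρ ω))) ω
        = ENNReal.ofReal (D.indicator ρ ω) := by
      filter_upwards [hρ_props] with ω hω
      by_cases hωD : ω ∈ D
      · rw [Set.indicator_of_mem hωD, Set.indicator_of_mem hωD, hmapIic (ρ ω) hω.1 hω.2.1]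
      · rw [Set.indicator_of_notMem hωD, Set.indicator_of_notMem hωD, ENNReal.ofReal_zero]
    have hDρ_int : Integrable (D.indicator ρ) P := hρ_int.indicator hD0
    have hDρ_nonneg : 0 ≤ᵐ[P] D.indicator ρ := by
      filter_upwards [hρ_props] with ω hω
      by_cases hωD : ω ∈ D <;> simp [Set.indicator_apply, hωD, hω.1]
    rw [hcalc, hlift, lintegral_congr_ae hae,
      ← ofReal_integral_eq_lintegral_ofReal hDρ_int hDρ_nonneg, integral_indicator hD0]
  -- the key identity
  have key : ∀ B : Set Ω, MeasurableSet[H] B →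
      P ({ω | Ustar ω = 1} ∩ B) = ENNReal.ofReal p * P B := by
    intro B hB
    have hB0 : MeasurableSet[m0] B := hH _ hB
    set E : Set Ω := A ∩ B with hEdef
    have hEH : MeasurableSet[H] E := hA.inter hB
    have hE0 : MeasurableSet[m0] E := hH _ hEH
    set D : Set Ω := E ∩ S1ᶜ with hDdef
    have hDSup : MeasurableSet[mSup] D := (hHSup _ hEH).inter (hUSup _ hS1comap.compl)
    have hD0 : MeasurableSet[m0] D := hSup_le _ hDSup
    have hdecomp : {ω | Ustar ω = 1} ∩ B = (E ∩ S1) ∪ ((D ∩ Zρ) ∪ ((Aᶜ ∩ B) ∩ Zp)) := by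
      rw [hTset, hDdef, hEdef]
      ext ω
      simp only [Set.mem_union, Set.mem_inter_iff, Set.mem_compl_iff]
      tauto
    have hdisj2 : Disjoint (D ∩ Zρ) ((Aᶜ ∩ B) ∩ Zp) := by
      rw [Set.disjoint_left]
      rintro ω ⟨⟨⟨hωA, _⟩, _⟩, _⟩ ⟨⟨hωA', _⟩, _⟩
      exact hωA' hωA
    have hdisj1 : Disjoint (E ∩ S1) ((D ∩ Zρ) ∪ ((Aᶜ ∩ B) ∩ Zp)) := by
      rw [Set.disjoint_union_right]
      constructor
      · rw [Set.disjoint_left]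
        rintro ω ⟨_, hωS⟩ ⟨⟨_, hωS'⟩, _⟩
        exact hωS' hωS
      · rw [Set.disjoint_left]
        rintro ω ⟨⟨hωA, _⟩, _⟩ ⟨⟨hωA', _⟩, _⟩
        exact hωA' hωA
    rw [hdecomp, measure_union hdisj1 (((hD0.inter hZρm)).union
      ((hAm0.compl.inter hB0).inter hZpm)), measure_union hdisj2
      ((hAm0.compl.inter hB0).inter hZpm)]
    -- term 3
    have ht3 : P ((Aᶜ ∩ B) ∩ Zp) = ENNReal.ofReal p * P (Aᶜ ∩ B) := by
      have hmem1 : MeasurableSet[MeasurableSpace.comap ζ Real.measurableSpace] Zp :=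
        ⟨Set.Iic p, measurableSet_Iic, rfl⟩
      have hmem2 : MeasurableSet[mSup] (Aᶜ ∩ B) := hHSup _ (hA.compl.inter hB)
      have h := (Indep_iff _ _ _).1 hindep Zp (Aᶜ ∩ B) hmem1 hmem2
      have hPZp : P Zp = ENNReal.ofReal p := by
        have hZp' : Zp = ζ ⁻¹' Set.Iic p := rfl
        rw [hZp', ← Measure.map_apply hζmeas measurableSet_Iic, hmapIic p hp0 hp1.le]
      rw [Set.inter_comm, h, hPZp]
    rw [hterm1 E hEH, hterm2 D hDSup, ht3]
    -- rewrite the D-integral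
    have hDint : ∫ ω in D, ρ ω ∂P = ∫ ω in E, ρ ω * (1 - pH ω) ∂P := by
      have h1 : ∫ ω in D, ρ ω ∂P = ∫ ω in E, Set.indicator S1ᶜ ρ ω ∂P :=
        (setIntegral_indicator hS1m0.compl).symm
      have h2 : ∀ ω, Set.indicator S1ᶜ ρ ω
          = ρ ω - ρ ω * S1.indicator (fun _ => (1 : ℝ)) ω := by
        intro ω
        by_cases hω : ω ∈ S1 <;> simp [Set.indicator_apply, hω]
      rw [h1]
      simp_rw [h2]
      rw [integral_sub hρ_int.integrableOn hmul_int.integrableOn, hpull E hEH,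
        ← integral_sub hρ_int.integrableOn hρpH_int.integrableOn]
      congr 1
      funext ω
      ring
    rw [hDint]
    -- combine the two A-terms
    have hint1_nonneg : 0 ≤ ∫ ω in E, pH ω ∂P := by
      refine setIntegral_nonneg_ae hE0 ?_
      filter_upwards [hpH_nonneg] with ω h _
      exact h
    have hint2_nonneg : 0 ≤ ∫ ω in E, ρ ω * (1 - pH ω) ∂P := by
      refine setIntegral_nonneg_ae hE0 ?_
      filter_upwards [hρ_props, hpH_le_one] with ω hω h1 _
      exact mul_nonneg hω.1 (by linarith)
    have hint12 : Integrable (fun ω => ρ ω * (1 - pH ω)) P :=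
      (hρ_int.sub hρpH_int).congr (Filter.Eventually.of_forall fun ω => by simp only [Pi.sub_apply]; ring)
    have hsum12 : ENNReal.ofReal (∫ ω in E, pH ω ∂P)
        + ENNReal.ofReal (∫ ω in E, ρ ω * (1 - pH ω) ∂P) = ENNReal.ofReal p * P E := by
      rw [← ENNReal.ofReal_add hint1_nonneg hint2_nonneg,
        ← integral_add hpH_int.integrableOn hint12.integrableOn]
      have hEp : ∫ ω in E, (pH ω + ρ ω * (1 - pH ω)) ∂P = ∫ ω in E, p ∂P := by
        refine setIntegral_congr_ae hE0 ?_
        filter_upwards [hρ_props] with ω hω hωE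
        exact hω.2.2 hωE.1
      rw [hEp, setIntegral_const, smul_eq_mul, mul_comm, ENNReal.ofReal_mul hp0,
        ofReal_measureReal (measure_ne_top P E)]
    rw [← add_assoc, hsum12, ← mul_add]
    congr 1
    have hAB : E = B ∩ A := by rw [hEdef, Set.inter_comm]
    have hAcB : Aᶜ ∩ B = B \ A := by rw [Set.diff_eq, Set.inter_comm]
    rw [hAB, hAcB, measure_inter_add_diff B hAm0]
  have hPT : P {ω | Ustar ω = 1} = ENNReal.ofReal p := by
    have h := key Set.univ MeasurableSet.univ
    simpa using h
  refine ⟨?_, ?_, ?_, hPT⟩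
  -- (i) pointwise domination
  · intro ω
    by_cases hωA : ω ∈ A
    · rw [Set.indicator_of_mem hωA]
      rcases hU01 ω with h | h
      · rw [h, zero_mul]
        rcases hUstar01 ω with h' | h' <;> rw [h'] <;> norm_num
      · rw [h, one_mul, hval ω, if_pos hωA, if_pos h]
    · rw [Set.indicator_of_notMem hωA, mul_zero]
      rcases hUstar01 ω with h' | h' <;> rw [h'] <;> norm_num
  -- (ii) conditional expectation is p
  · refine (ae_eq_condExp_of_forall_setIntegral_eq hH
      ((integrable_const (1 : ℝ)).indicator hTm0)
      (fun s _ _ => (integrable_const p).integrableOn) ?_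
      stronglyMeasurable_const.aestronglyMeasurable).symm
    intro s hs _
    rw [setIntegral_const, measureReal_def, hsetint _ s hTm0 (hH _ hs), key s hs, ENNReal.toReal_mul,
      ENNReal.toReal_ofReal hp0, smul_eq_mul, mul_comm]
  -- (iii) independence
  · rw [Indep_iff]
    rintro t1 t2 ⟨s, _, rfl⟩ h2
    by_cases h1s : (1 : ℝ) ∈ s <;> by_cases h0s : (0 : ℝ) ∈ s
    · have hpre : Ustar ⁻¹' s = Set.univ := by
        ext ω
        simp only [Set.mem_preimage, Set.mem_univ, iff_true]
        rcases hUstar01 ω with h | h <;> rw [h] <;> assumption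
      rw [hpre, Set.univ_inter, measure_univ, one_mul]
    · have hpre : Ustar ⁻¹' s = {ω | Ustar ω = 1} := by
        ext ω
        simp only [Set.mem_preimage, Set.mem_setOf_eq]
        constructor
        · intro hmem
          rcases hUstar01 ω with h | h
          · rw [h] at hmem; exact absurd hmem h0s
          · exact h
        · intro h; rw [h]; exact h1s
      rw [hpre, key t2 h2, hPT]
    · have hpre : Ustar ⁻¹' s = {ω | Ustar ω = 1}ᶜ := by
        ext ω
        simp only [Set.mem_preimage, Set.mem_compl_iff, Set.mem_setOf_eq]
        constructor
        · intro hmem heq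
          rw [heq] at hmem; exact h1s hmem
        · intro h
          rcases hUstar01 ω with h' | h'
          · rw [h']; exact h0s
          · exact absurd h' h
      rw [hpre]
      have hPTc : P {ω | Ustar ω = 1}ᶜ = 1 - ENNReal.ofReal p := by
        rw [measure_compl hTm0 (measure_ne_top P _), hPT, measure_univ]
      have hsplit : P ({ω | Ustar ω = 1} ∩ t2) + P ({ω | Ustar ω = 1}ᶜ ∩ t2) = P t2 := by
        rw [Set.inter_comm, Set.inter_comm _ t2, ← Set.diff_eq]
        exact measure_inter_add_diff t2 hTm0
      have h1 : P ({ω | Ustar ω = 1}ᶜ ∩ t2) = P t2 - ENNReal.ofReal p * P t2 := by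
        rw [← key t2 h2]
        refine ENNReal.eq_sub_of_add_eq (measure_ne_top P _) ?_
        rw [add_comm]; exact hsplit
      rw [h1, hPTc, ENNReal.sub_mul (fun _ _ => measure_ne_top P t2), one_mul]
    · have hpre : Ustar ⁻¹' s = ∅ := by
        ext ω
        simp only [Set.mem_preimage, Set.mem_empty_iff_false, iff_false]
        intro hmem
        rcases hUstar01 ω with h | h
        · rw [h] at hmem; exact h0s hmem
        · rw [h] at hmem; exact h1s hmem
      rw [hpre, Set.empty_inter, measure_empty, zero_mul]
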